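/- If w ≗° w̃ are unit-free compatible trees and M := M(w) = M(w̃), then there is a (necessarily unique) order-preserving bijection L_{≥M}(w) → L_{≥M}(w̃) between the sets of leaves of dimension at least M, with respect to the canonical linear order on leaves. -/

import Mathlib

namespace Sesq

/-- `(𝒪ₙ, X)`-labelled trees: leaves labelled by cells of `X`, internal vertices
labelled by unit generators `u_i` or composition/whiskering generators `∘_{i,j}`. -/
inductive PTree (X : Type) : Type
  | leaf : X → PTree X
  | unit : ℕ → PTree X → PTree X
  | comp : ℕ → ℕ → PTree X → PTree X → PTree X

namespace PTree

variable {X Y : Type}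

/-- Dimension of a labelled tree. -/
def dimT (dX : X → ℕ) : PTree X → ℕ
  | leaf c => dX c
  | unit i _ => i
  | comp i j _ _ => max i j

/-- Well-formedness: labels have the appropriate dimensions. -/
def WF (dX : X → ℕ) : PTree X → Prop
  | leaf _ => True
  | unit i x => WF dX x ∧ dimT dX x + 1 = i
  | comp i j x y => WF dX x ∧ WF dX y ∧ dimT dX x = i ∧ dimT dX y = j ∧ 1 ≤ i ∧ 1 ≤ j

/-- Relabelling the leaves of a tree. -/
def mapTree (f : X → Y) : PTree X → PTree Y
  | leaf c => leaf (f c)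
  | unit i x => unit i (mapTree f x)
  | comp i j x y => comp i j (mapTree f x) (mapTree f y)

/-- A tree contains no `u`-labelled vertices. -/
def UnitFree : PTree X → Prop
  | leaf _ => True
  | unit _ _ => False
  | comp _ _ x y => UnitFree x ∧ UnitFree y

/-- The ordered list of leaves of a tree (increasing for the canonical linear order:
every leaf of the left subtree of `∘_{i,j}` is greater than every leaf of the right one). -/
def leaves : PTree X → List X
  | leaf c => [c]
  | unit _ x => leaves x
  | comp _ _ x y => leaves y ++ leaves x

/-- The cell dimension `cd(x)`: the maximum of the dimensions of the cells labelling leaves. -/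
def cdim (dX : X → ℕ) (x : PTree X) : ℕ :=
  ((leaves x).map dX).foldr max 0

/-- The leaves of dimension at least `M`, in the canonical order. -/
def leavesGe (dX : X → ℕ) (M : ℕ) (x : PTree X) : List X :=
  (leaves x).filter fun c => M ≤ dX c

/-- `M(x) = max { j : x has at least two leaves of dimension ≥ j }`, with `M(x) = ⊥ = -∞`
if `x` has only one leaf. -/
def Mval (dX : X → ℕ) (x : PTree X) : WithBot ℕ :=
  (((List.range (cdim dX x + 1)).filter
      fun j => 2 ≤ ((leaves x).filter fun c => j ≤ dX c).length).map
      (fun j => (j : WithBot ℕ))).foldr max ⊥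

/-- The set of values `m(v) = min i j` over `∘_{i,j}`-labelled internal vertices. -/
def mset : PTree X → Finset ℕ
  | leaf _ => ∅
  | unit _ x => mset x
  | comp i j x y => insert (min i j) (mset x ∪ mset y)

/-- `H(x)`, the number of distinct values of `m(v)` over internal `∘`-vertices of `x`. -/
def Hval (x : PTree X) : ℕ := (mset x).card

/-- The reduction `r(x)`, deleting unit-generated subtrees; `none` plays the role of `∅`. -/
def reduce : PTree X → Option (PTree X)
  | leaf c => some (leaf c)
  | unit _ _ => none
  | comp i j x y =>
    if i = j then
      match reduce x, reduce y with
      | none, r => r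
      | r, none => r
      | some a, some b => some (comp i j a b)
    else if i < j then
      match reduce x, reduce y with
      | none, r => r
      | _, none => none
      | some a, some b => some (comp i j a b)
    else
      match reduce x, reduce y with
      | r, none => r
      | none, _ => none
      | some a, some b => some (comp i j a b)

/-- The slice `σ^M_ℓ(w)`, where the leaf `ℓ ∈ L_{≥M}(w)` is specified by its index
`idx` in the ordered list `leavesGe dX M w`. -/
def slice (dX : X → ℕ) (M : ℕ) : PTree X → ℕ → PTree X
  | leaf c, _ => leaf c
  | unit i x, _ => unit i x
  | comp i j x y, idx =>
    if M ≤ min i j then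
      if idx < (leavesGe dX M y).length then slice dX M y idx
      else slice dX M x (idx - (leavesGe dX M y).length)
    else if i < j then
      comp i (dimT dX (slice dX M y idx)) x (slice dX M y idx)
    else
      comp (dimT dX (slice dX M x idx)) j (slice dX M x idx) y

/-- Grafting the chain of units `u_{a+1} → ⋯ → u_b` on top of `t`. -/
def graftUnits (t : PTree X) (a : ℕ) : ℕ → PTree X
  | 0 => t
  | b + 1 => if a < b + 1 then unit (b + 1) (graftUnits t a b) else t

/-- The root of `t` is not a unit vertex. -/
def notUnitRoot (t : PTree X) : Prop := ∀ i y, t ≠ unit i y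

/-- If the root of `t` is a `∘`-vertex, then its `m`-value is `< m`. -/
def smallRoot (m : ℕ) (t : PTree X) : Prop :=
  ∀ a b u v, t = comp a b u v → min a b < m

/-- The labelled-subtree relation: `IsSubtree s t` iff `s` is the full subtree of `t`
above some vertex. -/
inductive IsSubtree : PTree X → PTree X → Prop
  | refl (t) : IsSubtree t t
  | unit (i x s) : IsSubtree s x → IsSubtree s (PTree.unit i x)
  | left (i j x y s) : IsSubtree s x → IsSubtree s (PTree.comp i j x y)
  | right (i j x y s) : IsSubtree s y → IsSubtree s (PTree.comp i j x y)

end PTree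

/-- A precomputad: a set of cells with dimensions and source/target trees. -/
structure Precomputad where
  cells : Type
  dim : cells → ℕ
  csrc : cells → PTree cells
  ctgt : cells → PTree cells

namespace Precomputad

variable (P : Precomputad)

/-- The source map on labelled trees. -/
def srcT : PTree P.cells → PTree P.cells
  | .leaf c => P.csrc c
  | .unit _ x => x
  | .comp i j x y =>
    if i = j then srcT y
    else if i < j then .comp i (j - 1) x (srcT y)
    else .comp (i - 1) j (srcT x) y

/-- The target map on labelled trees. -/
def tgtT : PTree P.cells → PTree P.cells
  | .leaf c => P.ctgt c
  | .unit _ x => x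
  | .comp i j x y =>
    if i = j then tgtT y
    else if i < j then .comp i (j - 1) x (tgtT y)
    else .comp (i - 1) j (tgtT x) y

/-- Iterated source. -/
def srcIter (k : ℕ) : PTree P.cells → PTree P.cells := P.srcT^[k]

/-- Iterated target. -/
def tgtIter (k : ℕ) : PTree P.cells → PTree P.cells := P.tgtT^[k]

end Precomputad

open PTree

mutual

/-- `≗`-compatibility of labelled trees. -/
inductive Compat (P : Precomputad) : PTree P.cells → Prop
  | leaf (c) : Compat P (.leaf c)
  | unit {i : ℕ} {x} : Compat P x → dimT P.dim x + 1 = i → Compat P (.unit i x)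
  | comp {i j : ℕ} {x y} : Compat P x → Compat P y →
      dimT P.dim x = i → dimT P.dim y = j → 1 ≤ min i j →
      Rel P (P.srcIter (i - min i j + 1) x) (P.tgtIter (j - min i j + 1) y) →
      Compat P (.comp i j x y)

/-- The equivalence relation `≗` on compatible trees, generated by the relations `ℰₙ`
(units, associativity and congruence). -/
inductive Rel (P : Precomputad) : PTree P.cells → PTree P.cells → Prop
  | refl {x} : Compat P x → Rel P x x
  | symm {x y} : Rel P x y → Rel P y x
  | trans {x y z} : Rel P x y → Rel P y z → Rel P x z
  | congr_unit {k x x'} : Rel P x x' → Rel P (.unit k x) (.unit k x')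
  | congr_comp {i j x x' y y'} : Rel P x x' → Rel P y y' →
      Compat P (.comp i j x y) → Compat P (.comp i j x' y') →
      Rel P (.comp i j x y) (.comp i j x' y')
  | lam_unit {i k x y} : i ≤ k → Compat P x → Compat P y →
      dimT P.dim x + 1 = i → dimT P.dim y = k →
      Rel P x (P.tgtIter (k - i + 1) y) →
      Rel P (.comp i k (.unit i x) y) y
  | rho_unit {k i x y} : i ≤ k → Compat P x → Compat P y →
      dimT P.dim x = k → dimT P.dim y + 1 = i →
      Rel P (P.srcIter (k - i + 1) x) y →
      Rel P (.comp k i x (.unit i y)) x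
  | rho_push {i k x y} : i < k → Compat P x → Compat P y →
      dimT P.dim x = i → dimT P.dim y + 1 = k →
      Rel P (P.srcT x) (P.tgtIter (k - i) y) →
      Rel P (.comp i k x (.unit k y)) (.unit k (.comp i (k - 1) x y))
  | lam_push {k i x y} : i < k → Compat P x → Compat P y →
      dimT P.dim x + 1 = k → dimT P.dim y = i →
      Rel P (P.srcIter (k - i) x) (P.tgtT y) →
      Rel P (.comp k i (.unit k x) y) (.unit k (.comp (k - 1) i x y))
  | assoc_kkk {k x y z} : Compat P x → Compat P y → Compat P z →
      dimT P.dim x = k → dimT P.dim y = k → dimT P.dim z = k →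
      Rel P (P.srcT x) (P.tgtT y) → Rel P (P.srcT y) (P.tgtT z) →
      Rel P (.comp k k (.comp k k x y) z) (.comp k k x (.comp k k y z))
  | assoc_iik {i k x y z} : i < k → Compat P x → Compat P y → Compat P z →
      dimT P.dim x = i → dimT P.dim y = i → dimT P.dim z = k →
      Rel P (P.srcT x) (P.tgtT y) → Rel P (P.srcT y) (P.tgtIter (k - i + 1) z) →
      Rel P (.comp i k (.comp i i x y) z) (.comp i k x (.comp i k y z))
  | assoc_iki {i k x y z} : i < k → Compat P x → Compat P y → Compat P z →
      dimT P.dim x = i → dimT P.dim y = k → dimT P.dim z = i →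
      Rel P (P.srcT x) (P.tgtIter (k - i + 1) y) → Rel P (P.srcIter (k - i + 1) y) (P.tgtT z) →
      Rel P (.comp k i (.comp i k x y) z) (.comp i k x (.comp k i y z))
  | assoc_kii {i k x y z} : i < k → Compat P x → Compat P y → Compat P z →
      dimT P.dim x = k → dimT P.dim y = i → dimT P.dim z = i →
      Rel P (P.srcIter (k - i + 1) x) (P.tgtT y) → Rel P (P.srcT y) (P.tgtT z) →
      Rel P (.comp k i (.comp k i x y) z) (.comp k i x (.comp i i y z))
  | assoc_ikk {i k x y z} : i < k → Compat P x → Compat P y → Compat P z →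
      dimT P.dim x = i → dimT P.dim y = k → dimT P.dim z = k →
      Rel P (P.srcT x) (P.tgtIter (k - i + 1) y) → Rel P (P.srcT y) (P.tgtT z) →
      Rel P (.comp i k x (.comp k k y z)) (.comp k k (.comp i k x y) (.comp i k x z))
  | assoc_kki {i k x y z} : i < k → Compat P x → Compat P y → Compat P z →
      dimT P.dim x = k → dimT P.dim y = k → dimT P.dim z = i →
      Rel P (P.srcT x) (P.tgtT y) → Rel P (P.srcIter (k - i + 1) y) (P.tgtT z) →
      Rel P (.comp k i (.comp k k x y) z) (.comp k k (.comp k i x z) (.comp k i y z))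
  | assoc_ijk {i j k x y z} : i < j → j < k → Compat P x → Compat P y → Compat P z →
      dimT P.dim x = i → dimT P.dim y = j → dimT P.dim z = k →
      Rel P (P.srcT x) (P.tgtIter (j - i + 1) y) → Rel P (P.srcT y) (P.tgtIter (k - j + 1) z) →
      Rel P (.comp i k x (.comp j k y z)) (.comp j k (.comp i j x y) (.comp i k x z))
  | assoc_ikj {i j k x y z} : i < j → j < k → Compat P x → Compat P y → Compat P z →
      dimT P.dim x = i → dimT P.dim y = k → dimT P.dim z = j →
      Rel P (P.srcT x) (P.tgtIter (k - i + 1) y) → Rel P (P.srcIter (k - j + 1) y) (P.tgtT z) →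
      Rel P (.comp i k x (.comp k j y z)) (.comp k j (.comp i k x y) (.comp i j x z))
  | assoc_jki {i j k x y z} : i < j → j < k → Compat P x → Compat P y → Compat P z →
      dimT P.dim x = j → dimT P.dim y = k → dimT P.dim z = i →
      Rel P (P.srcT x) (P.tgtIter (k - j + 1) y) → Rel P (P.srcIter (k - i + 1) y) (P.tgtT z) →
      Rel P (.comp k i (.comp j k x y) z) (.comp j k (.comp j i x z) (.comp k i y z))
  | assoc_kji {i j k x y z} : i < j → j < k → Compat P x → Compat P y → Compat P z →
      dimT P.dim x = k → dimT P.dim y = j → dimT P.dim z = i →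
      Rel P (P.srcIter (k - j + 1) x) (P.tgtT y) → Rel P (P.srcIter (j - i + 1) y) (P.tgtT z) →
      Rel P (.comp k i (.comp k j x y) z) (.comp k j (.comp k i x z) (.comp j i y z))

end

mutual

/-- `≗°`-compatibility: compatibility with respect to the unit-free relations only. -/
inductive CompatO (P : Precomputad) : PTree P.cells → Prop
  | leaf (c) : CompatO P (.leaf c)
  | unit {i : ℕ} {x} : CompatO P x → dimT P.dim x + 1 = i → CompatO P (.unit i x)
  | comp {i j : ℕ} {x y} : CompatO P x → CompatO P y →
      dimT P.dim x = i → dimT P.dim y = j → 1 ≤ min i j →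
      RelO P (P.srcIter (i - min i j + 1) x) (P.tgtIter (j - min i j + 1) y) →
      CompatO P (.comp i j x y)

/-- The unit-free equivalence `≗°`, generated by the relations of `ℰₙ` not involving units. -/
inductive RelO (P : Precomputad) : PTree P.cells → PTree P.cells → Prop
  | refl {x} : CompatO P x → RelO P x x
  | symm {x y} : RelO P x y → RelO P y x
  | trans {x y z} : RelO P x y → RelO P y z → RelO P x z
  | congr_comp {i j x x' y y'} : RelO P x x' → RelO P y y' →
      CompatO P (.comp i j x y) → CompatO P (.comp i j x' y') →
      RelO P (.comp i j x y) (.comp i j x' y')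
  | assoc_kkk {k x y z} : CompatO P x → CompatO P y → CompatO P z →
      dimT P.dim x = k → dimT P.dim y = k → dimT P.dim z = k →
      RelO P (P.srcT x) (P.tgtT y) → RelO P (P.srcT y) (P.tgtT z) →
      RelO P (.comp k k (.comp k k x y) z) (.comp k k x (.comp k k y z))
  | assoc_iik {i k x y z} : i < k → CompatO P x → CompatO P y → CompatO P z →
      dimT P.dim x = i → dimT P.dim y = i → dimT P.dim z = k →
      RelO P (P.srcT x) (P.tgtT y) → RelO P (P.srcT y) (P.tgtIter (k - i + 1) z) →
      RelO P (.comp i k (.comp i i x y) z) (.comp i k x (.comp i k y z))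
  | assoc_iki {i k x y z} : i < k → CompatO P x → CompatO P y → CompatO P z →
      dimT P.dim x = i → dimT P.dim y = k → dimT P.dim z = i →
      RelO P (P.srcT x) (P.tgtIter (k - i + 1) y) → RelO P (P.srcIter (k - i + 1) y) (P.tgtT z) →
      RelO P (.comp k i (.comp i k x y) z) (.comp i k x (.comp k i y z))
  | assoc_kii {i k x y z} : i < k → CompatO P x → CompatO P y → CompatO P z →
      dimT P.dim x = k → dimT P.dim y = i → dimT P.dim z = i →
      RelO P (P.srcIter (k - i + 1) x) (P.tgtT y) → RelO P (P.srcT y) (P.tgtT z) →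
      RelO P (.comp k i (.comp k i x y) z) (.comp k i x (.comp i i y z))
  | assoc_ikk {i k x y z} : i < k → CompatO P x → CompatO P y → CompatO P z →
      dimT P.dim x = i → dimT P.dim y = k → dimT P.dim z = k →
      RelO P (P.srcT x) (P.tgtIter (k - i + 1) y) → RelO P (P.srcT y) (P.tgtT z) →
      RelO P (.comp i k x (.comp k k y z)) (.comp k k (.comp i k x y) (.comp i k x z))
  | assoc_kki {i k x y z} : i < k → CompatO P x → CompatO P y → CompatO P z →
      dimT P.dim x = k → dimT P.dim y = k → dimT P.dim z = i →
      RelO P (P.srcT x) (P.tgtT y) → RelO P (P.srcIter (k - i + 1) y) (P.tgtT z) →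
      RelO P (.comp k i (.comp k k x y) z) (.comp k k (.comp k i x z) (.comp k i y z))
  | assoc_ijk {i j k x y z} : i < j → j < k → CompatO P x → CompatO P y → CompatO P z →
      dimT P.dim x = i → dimT P.dim y = j → dimT P.dim z = k →
      RelO P (P.srcT x) (P.tgtIter (j - i + 1) y) → RelO P (P.srcT y) (P.tgtIter (k - j + 1) z) →
      RelO P (.comp i k x (.comp j k y z)) (.comp j k (.comp i j x y) (.comp i k x z))
  | assoc_ikj {i j k x y z} : i < j → j < k → CompatO P x → CompatO P y → CompatO P z →
      dimT P.dim x = i → dimT P.dim y = k → dimT P.dim z = j →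
      RelO P (P.srcT x) (P.tgtIter (k - i + 1) y) → RelO P (P.srcIter (k - j + 1) y) (P.tgtT z) →
      RelO P (.comp i k x (.comp k j y z)) (.comp k j (.comp i k x y) (.comp i j x z))
  | assoc_jki {i j k x y z} : i < j → j < k → CompatO P x → CompatO P y → CompatO P z →
      dimT P.dim x = j → dimT P.dim y = k → dimT P.dim z = i →
      RelO P (P.srcT x) (P.tgtIter (k - j + 1) y) → RelO P (P.srcIter (k - i + 1) y) (P.tgtT z) →
      RelO P (.comp k i (.comp j k x y) z) (.comp j k (.comp j i x z) (.comp k i y z))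
  | assoc_kji {i j k x y z} : i < j → j < k → CompatO P x → CompatO P y → CompatO P z →
      dimT P.dim x = k → dimT P.dim y = j → dimT P.dim z = i →
      RelO P (P.srcIter (k - j + 1) x) (P.tgtT y) → RelO P (P.srcIter (j - i + 1) y) (P.tgtT z) →
      RelO P (.comp k i (.comp k j x y) z) (.comp k j (.comp k i x z) (.comp j i y z))

end

mutual

/-- Trees in normal form: `m`-ordered, no edge `u → ∘`, and every `m`-constant
component in one of the two prescribed chain shapes. -/
inductive NF {X : Type} : PTree X → Prop
  | leaf (c : X) : NF (.leaf c)
  | unit (i : ℕ) (x : PTree X) : NF x → NF (.unit i x)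
  | compEq (k : ℕ) (x y : PTree X) : NF x → notUnitRoot x → smallRoot k x →
      ChainKK k y → NF (.comp k k x y)
  | compLt (i k : ℕ) (x y : PTree X) : i < k → NF x → notUnitRoot x → smallRoot i x →
      ChainA i k y → NF (.comp i k x y)
  | compGt (i k : ℕ) (x y : PTree X) : i < k → ChainB i k x → NF y → notUnitRoot y →
      smallRoot i y → NF (.comp k i x y)

/-- Continuation of an `m`-constant `∘_{k,k}`-chain in normal form. -/
inductive ChainKK {X : Type} : ℕ → PTree X → Prop
  | cons (k : ℕ) (x y : PTree X) : NF x → notUnitRoot x → smallRoot k x →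
      ChainKK k y → ChainKK k (.comp k k x y)
  | base (k : ℕ) (t : PTree X) : NF t → notUnitRoot t → smallRoot k t → ChainKK k t

/-- Continuation of the `∘_{i,k}`-phase of a mixed `m`-constant chain in normal form. -/
inductive ChainA {X : Type} : ℕ → ℕ → PTree X → Prop
  | cons (i k : ℕ) (x y : PTree X) : NF x → notUnitRoot x → smallRoot i x →
      ChainA i k y → ChainA i k (.comp i k x y)
  | toB (i k : ℕ) (t : PTree X) : ChainB i k t → ChainA i k t

/-- Continuation of the `∘_{k,i}`-phase of a mixed `m`-constant chain in normal form. -/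
inductive ChainB {X : Type} : ℕ → ℕ → PTree X → Prop
  | cons (i k : ℕ) (x y : PTree X) : ChainB i k x → NF y → notUnitRoot y →
      smallRoot i y → ChainB i k (.comp k i x y)
  | base (i k : ℕ) (t : PTree X) : NF t → notUnitRoot t → smallRoot i t → ChainB i k t

end

/-- A computad for the `n`-sesquicategory monad: cells of dimension `≤ n+1` with
compatible source/target trees satisfying the globularity relations up to `≗`. -/
structure Computad (n : ℕ) extends Precomputad where
  dim_le : ∀ c, dim c ≤ n + 1
  src_wf : ∀ c, 1 ≤ dim c → WF dim (csrc c)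
  tgt_wf : ∀ c, 1 ≤ dim c → WF dim (ctgt c)
  src_dim : ∀ c, 1 ≤ dim c → dimT dim (csrc c) + 1 = dim c
  tgt_dim : ∀ c, 1 ≤ dim c → dimT dim (ctgt c) + 1 = dim c
  src_compat : ∀ c, 1 ≤ dim c → Compat toPrecomputad (csrc c)
  tgt_compat : ∀ c, 1 ≤ dim c → Compat toPrecomputad (ctgt c)
  glob_s : ∀ c, 2 ≤ dim c →
    Rel toPrecomputad (toPrecomputad.srcT (csrc c)) (toPrecomputad.srcT (ctgt c))
  glob_t : ∀ c, 2 ≤ dim c →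
    Rel toPrecomputad (toPrecomputad.tgtT (csrc c)) (toPrecomputad.tgtT (ctgt c))

/-- A map of computads: a dimension-preserving map of cells commuting with
source and target up to `≗`. -/
structure CompHom {n : ℕ} (C D : Computad n) where
  f : C.cells → D.cells
  dim_eq : ∀ c, D.dim (f c) = C.dim c
  src_ok : ∀ c, 1 ≤ C.dim c →
    Rel D.toPrecomputad (D.csrc (f c)) (mapTree f (C.csrc c))
  tgt_ok : ∀ c, 1 ≤ C.dim c →
    Rel D.toPrecomputad (D.ctgt (f c)) (mapTree f (C.ctgt c))

end Sesq

namespace Sesq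

open PTree

private lemma le_foldr_max {α : Type*} [LinearOrder α] (b : α) {a : α} {l : List α}
    (h : a ∈ l) : a ≤ l.foldr max b := by
  induction l with
  | nil => cases h
  | cons x t ih =>
      rcases List.mem_cons.1 h with rfl | h
      · exact le_max_left _ _
      · exact le_trans (ih h) (le_max_right _ _)

private lemma dim_le_dimT (P : Precomputad) : ∀ {x : PTree P.cells}, CompatO P x →
    ∀ c ∈ leaves x, P.dim c ≤ dimT P.dim x := by
  intro x
  induction x with
  | leaf d =>
      intro _ c hc
      simp only [leaves, List.mem_singleton] at hc
      subst hc; exact le_refl _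
  | unit i x ih =>
      intro hx c hc
      cases hx with
      | unit hx0 hd =>
          have : P.dim c ≤ dimT P.dim x := ih hx0 c hc
          show P.dim c ≤ i
          omega
  | comp i j x y ihx ihy =>
      intro hx c hc
      cases hx with
      | comp hcx hcy hdx hdy _ _ =>
          show P.dim c ≤ max i j
          rcases List.mem_append.1 hc with hc | hc
          · have := ihy hcy c hc
            calc P.dim c ≤ dimT P.dim y := this
              _ = j := hdy
              _ ≤ max i j := le_max_right _ _
          · have := ihx hcx c hc
            calc P.dim c ≤ dimT P.dim x := this
              _ = i := hdx
              _ ≤ max i j := le_max_left _ _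

private lemma exists_leaf (P : Precomputad) : ∀ {x : PTree P.cells}, CompatO P x →
    UnitFree x → ∃ c ∈ leaves x, dimT P.dim x ≤ P.dim c := by
  intro x
  induction x with
  | leaf d => intro _ _; exact ⟨d, List.mem_singleton_self _, le_refl _⟩
  | unit i x ih => intro _ hu; exact absurd hu (by simp [UnitFree])
  | comp i j x y ihx ihy =>
      intro hx hu
      cases hx with
      | comp hcx hcy hdx hdy _ _ =>
          simp only [UnitFree] at hu
          obtain ⟨hux, huy⟩ := hu
          by_cases hij : i ≤ j
          · obtain ⟨c, hc, hd⟩ := ihy hcy huy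
            refine ⟨c, List.mem_append_left _ hc, ?_⟩
            show max i j ≤ P.dim c
            have : dimT P.dim y = j := hdy
            omega
          · obtain ⟨c, hc, hd⟩ := ihx hcx hux
            refine ⟨c, List.mem_append_right _ hc, ?_⟩
            show max i j ≤ P.dim c
            have : dimT P.dim x = i := hdx
            omega

private lemma leavesGe_pos (P : Precomputad) {x : PTree P.cells} (hx : CompatO P x)
    (hu : UnitFree x) {M : ℕ} (hM : M ≤ dimT P.dim x) :
    1 ≤ (leavesGe P.dim M x).length := by
  obtain ⟨c, hc, hd⟩ := exists_leaf P hx hu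
  have hmem : c ∈ leavesGe P.dim M x := by
    rw [leavesGe, List.mem_filter]
    exact ⟨hc, by simp; omega⟩
  have := List.length_pos_iff.2 (List.ne_nil_of_mem hmem)
  omega

private lemma leavesGe_comp {X : Type} (dX : X → ℕ) (M i j : ℕ) (x y : PTree X) :
    leavesGe dX M (PTree.comp i j x y) = leavesGe dX M y ++ leavesGe dX M x := by
  simp [leavesGe, leaves, List.filter_append]

private lemma leavesGe_succ {X : Type} (dX : X → ℕ) (M : ℕ) (t : PTree X) :
    leavesGe dX (M+1) t = (leavesGe dX M t).filter (fun c => M+1 ≤ dX c) := by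
  unfold leavesGe
  rw [List.filter_filter]
  refine (List.filter_congr fun c _ => ?_)
  by_cases h : M + 1 ≤ dX c
  · simp [h]; omega
  · simp [h]

private lemma le_Mval {X : Type} (dX : X → ℕ) (w : PTree X) (j : ℕ)
    (h2 : 2 ≤ (leavesGe dX j w).length) : (j : WithBot ℕ) ≤ Mval dX w := by
  have hne : leavesGe dX j w ≠ [] := by
    intro h; rw [h] at h2; simp at h2
  obtain ⟨c, hc⟩ := List.exists_mem_of_ne_nil _ hne
  rw [leavesGe, List.mem_filter] at hc
  have hcd : dX c ≤ cdim dX w :=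
    le_foldr_max 0 (List.mem_map_of_mem (f := dX) hc.1)
  have hj : j ≤ dX c := by simpa using hc.2
  have hmem : j ∈ (List.range (cdim dX w + 1)).filter
      (fun j => 2 ≤ ((leaves w).filter fun c => j ≤ dX c).length) := by
    rw [List.mem_filter]
    refine ⟨List.mem_range.2 (by omega), ?_⟩
    simpa [leavesGe] using h2
  rw [Mval]
  refine le_foldr_max ⊥ ?_
  refine List.mem_map.2 ⟨(j : WithBot ℕ), ?_, rfl⟩
  show (j : WithBot ℕ) ∈ List.flatMap (fun a : ℕ => pure ((a : ℕ) : WithBot ℕ)) _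
  exact List.mem_flatMap.2 ⟨j, hmem, List.mem_singleton_self _⟩

private abbrev Qprop (P : Precomputad) (a b : PTree P.cells) : Prop :=
  (UnitFree a ↔ UnitFree b) ∧
  (UnitFree a → ∀ M : ℕ, leavesGe P.dim M a = leavesGe P.dim M b ∨
    (2 ≤ (leavesGe P.dim (M+1) a).length ∧ 2 ≤ (leavesGe P.dim (M+1) b).length))

private lemma dup_helper (P : Precomputad) {x p q : PTree P.cells} {dx : ℕ}
    (hx : CompatO P x) (hdx : dimT P.dim x = dx)
    (hp : CompatO P p) (hup : UnitFree p) (hdp : dx < dimT P.dim p)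
    (hq : CompatO P q) (huq : UnitFree q) (hdq : dx < dimT P.dim q) (M : ℕ) :
    leavesGe P.dim M x = [] ∨
      (1 ≤ (leavesGe P.dim (M+1) p).length ∧ 1 ≤ (leavesGe P.dim (M+1) q).length) := by
  by_cases h0 : leavesGe P.dim M x = []
  · exact Or.inl h0
  · obtain ⟨c, hc⟩ := List.exists_mem_of_ne_nil _ h0
    rw [leavesGe, List.mem_filter] at hc
    have h1 : P.dim c ≤ dimT P.dim x := dim_le_dimT P hx c hc.1
    have h2 : M ≤ P.dim c := by simpa using hc.2
    exact Or.inr ⟨leavesGe_pos P hp hup (by omega), leavesGe_pos P hq huq (by omega)⟩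

set_option maxHeartbeats 1000000 in
private lemma key (P : Precomputad) {a b : PTree P.cells} (h : RelO P a b) :
    Qprop P a b := by
  refine RelO.rec (motive_1 := fun t _ => True) (motive_2 := fun a b _ => Qprop P a b)
    ?_ ?_ ?_ ?_ ?_ ?_ ?_ ?_ ?_ ?_ ?_ ?_ ?_ ?_ ?_ ?_ ?_ h
  -- CompatO.leaf
  · intros; trivial
  -- CompatO.unit
  · intros; trivial
  -- CompatO.comp
  · intros; trivial
  -- refl
  · intro x _ _
    exact ⟨Iff.rfl, fun _ _ => Or.inl rfl⟩
  -- symm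
  · intro x y _ IH
    exact ⟨IH.1.symm, fun hu M => (IH.2 (IH.1.mpr hu) M).imp Eq.symm And.symm⟩
  -- trans
  · intro x y z _ _ IH1 IH2
    refine ⟨IH1.1.trans IH2.1, fun hu M => ?_⟩
    have hub := IH1.1.mp hu
    rcases IH1.2 hu M with h1 | h1 <;> rcases IH2.2 hub M with h2 | h2
    · exact Or.inl (h1.trans h2)
    · refine Or.inr ⟨?_, h2.2⟩
      rw [leavesGe_succ, h1, ← leavesGe_succ]; exact h2.1
    · refine Or.inr ⟨h1.1, ?_⟩
      rw [leavesGe_succ, ← h2, ← leavesGe_succ]; exact h1.2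
    · exact Or.inr ⟨h1.1, h2.2⟩
  -- congr_comp
  · intro i j x x' y y' _ _ _ _ IHx IHy _ _
    refine ⟨?_, fun hu M => ?_⟩
    · show UnitFree x ∧ UnitFree y ↔ UnitFree x' ∧ UnitFree y'
      rw [IHx.1, IHy.1]
    · simp only [UnitFree] at hu
      obtain ⟨hux, huy⟩ := hu
      rcases IHx.2 hux M with hx | ⟨hx1, hx2⟩
      · rcases IHy.2 huy M with hy | ⟨hy1, hy2⟩
        · exact Or.inl (by rw [leavesGe_comp, leavesGe_comp, hx, hy])
        · refine Or.inr ⟨?_, ?_⟩ <;> rw [leavesGe_comp, List.length_append] <;> omega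
      · refine Or.inr ⟨?_, ?_⟩ <;> rw [leavesGe_comp, List.length_append] <;> omega
  -- assoc_kkk
  · intro k x y z _ _ _ _ _ _ _ _ _ _ _ _ _
    exact ⟨by simp [UnitFree, and_assoc],
      fun _ M => Or.inl (by simp [leavesGe_comp, List.append_assoc])⟩
  -- assoc_iik
  · intro i k x y z _ _ _ _ _ _ _ _ _ _ _ _ _ _
    exact ⟨by simp [UnitFree, and_assoc],
      fun _ M => Or.inl (by simp [leavesGe_comp, List.append_assoc])⟩
  -- assoc_iki
  · intro i k x y z _ _ _ _ _ _ _ _ _ _ _ _ _ _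
    exact ⟨by simp [UnitFree, and_assoc],
      fun _ M => Or.inl (by simp [leavesGe_comp, List.append_assoc])⟩
  -- assoc_kii
  · intro i k x y z _ _ _ _ _ _ _ _ _ _ _ _ _ _
    exact ⟨by simp [UnitFree, and_assoc],
      fun _ M => Or.inl (by simp [leavesGe_comp, List.append_assoc])⟩
  -- assoc_ikk  (x of dim i duplicated; y z of dim k)
  · intro i k x y z hik hcx hcy hcz hdx hdy hdz _ _ _ _ _ _ _
    refine ⟨by simp [UnitFree]; tauto, fun hu M => ?_⟩
    simp only [UnitFree] at hu
    obtain ⟨hux, huy, huz⟩ := hu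
    rcases dup_helper P hcx hdx hcy huy (by rw [hdy]; omega) hcz huz (by rw [hdz]; omega) M
      with h0 | ⟨h1, h2⟩
    · exact Or.inl (by simp [leavesGe_comp, h0, List.append_assoc])
    · refine Or.inr ⟨?_, ?_⟩ <;> simp only [leavesGe_comp, List.length_append] <;> omega
  -- assoc_kki  (z of dim i duplicated; x y of dim k)
  · intro i k x y z hik hcx hcy hcz hdx hdy hdz _ _ _ _ _ _ _
    refine ⟨by simp [UnitFree]; tauto, fun hu M => ?_⟩
    simp only [UnitFree] at hu
    obtain ⟨⟨hux, huy⟩, huz⟩ := hu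
    rcases dup_helper P hcz hdz hcx hux (by rw [hdx]; omega) hcy huy (by rw [hdy]; omega) M
      with h0 | ⟨h1, h2⟩
    · exact Or.inl (by simp [leavesGe_comp, h0, List.append_assoc])
    · refine Or.inr ⟨?_, ?_⟩ <;> simp only [leavesGe_comp, List.length_append] <;> omega
  -- assoc_ijk  (x of dim i duplicated; y dim j, z dim k)
  · intro i j k x y z hij hjk hcx hcy hcz hdx hdy hdz _ _ _ _ _ _ _
    refine ⟨by simp [UnitFree]; tauto, fun hu M => ?_⟩
    simp only [UnitFree] at hu
    obtain ⟨hux, huy, huz⟩ := hu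
    rcases dup_helper P hcx hdx hcy huy (by rw [hdy]; omega) hcz huz (by rw [hdz]; omega) M
      with h0 | ⟨h1, h2⟩
    · exact Or.inl (by simp [leavesGe_comp, h0, List.append_assoc])
    · refine Or.inr ⟨?_, ?_⟩ <;> simp only [leavesGe_comp, List.length_append] <;> omega
  -- assoc_ikj  (x of dim i duplicated; y dim k, z dim j)
  · intro i j k x y z hij hjk hcx hcy hcz hdx hdy hdz _ _ _ _ _ _ _
    refine ⟨by simp [UnitFree]; tauto, fun hu M => ?_⟩
    simp only [UnitFree] at hu
    obtain ⟨hux, huy, huz⟩ := hu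
    rcases dup_helper P hcx hdx hcy huy (by rw [hdy]; omega) hcz huz (by rw [hdz]; omega) M
      with h0 | ⟨h1, h2⟩
    · exact Or.inl (by simp [leavesGe_comp, h0, List.append_assoc])
    · refine Or.inr ⟨?_, ?_⟩ <;> simp only [leavesGe_comp, List.length_append] <;> omega
  -- assoc_jki  (z of dim i duplicated; x dim j, y dim k)
  · intro i j k x y z hij hjk hcx hcy hcz hdx hdy hdz _ _ _ _ _ _ _
    refine ⟨by simp [UnitFree]; tauto, fun hu M => ?_⟩
    simp only [UnitFree] at hu
    obtain ⟨⟨hux, huy⟩, huz⟩ := hu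
    rcases dup_helper P hcz hdz hcx hux (by rw [hdx]; omega) hcy huy (by rw [hdy]; omega) M
      with h0 | ⟨h1, h2⟩
    · exact Or.inl (by simp [leavesGe_comp, h0, List.append_assoc])
    · refine Or.inr ⟨?_, ?_⟩ <;> simp only [leavesGe_comp, List.length_append] <;> omega
  -- assoc_kji  (z of dim i duplicated; x dim k, y dim j)
  · intro i j k x y z hij hjk hcx hcy hcz hdx hdy hdz _ _ _ _ _ _ _
    refine ⟨by simp [UnitFree]; tauto, fun hu M => ?_⟩
    simp only [UnitFree] at hu
    obtain ⟨⟨hux, huy⟩, huz⟩ := hu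
    rcases dup_helper P hcz hdz hcx hux (by rw [hdx]; omega) hcy huy (by rw [hdy]; omega) M
      with h0 | ⟨h1, h2⟩
    · exact Or.inl (by simp [leavesGe_comp, h0, List.append_assoc])
    · refine Or.inr ⟨?_, ?_⟩ <;> simp only [leavesGe_comp, List.length_append] <;> omega

end Sesq
namespace Sesq

/-- If `w ≗° w̃` and `M = M(w) = M(w̃)`, then there is a (necessarily
unique) order-preserving bijection `L_{≥M}(w) → L_{≥M}(w̃)` (here expressed as an order
isomorphism between the index sets of the ordered lists of leaves of dimension `≥ M`). -/
theorem exists_orderIso_leavesGe {n : ℕ} (C : Computad n) (w w' : PTree C.cells)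
    (huw : PTree.UnitFree w) (huw' : PTree.UnitFree w')
    (hw : CompatO C.toPrecomputad w) (hw' : CompatO C.toPrecomputad w')
    (h : RelO C.toPrecomputad w w') (M : ℕ)
    (hM : PTree.Mval C.dim w = (M : WithBot ℕ))
    (hM' : PTree.Mval C.dim w' = (M : WithBot ℕ)) :
    Nonempty (Fin (PTree.leavesGe C.dim M w).length ≃o
      Fin (PTree.leavesGe C.dim M w').length) := by
  rcases (key C.toPrecomputad h).2 huw M with heq | ⟨h2, _⟩
  · exact ⟨Fin.castOrderIso (by rw [heq])⟩
  · exfalso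
    have hle := le_Mval C.dim w (M+1) h2
    rw [hM] at hle
    norm_cast at hle
    omega

end Sesq
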